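/- Let g : ℝ → ℝ be monotonically increasing, let X be a standard Gaussian random variable (X ~ N(0,1)), assume E[|X·g(X)|] < ∞, and let h : ℝ → ℝ be measurable such that for Lebesgue-almost every x ∈ ℝ, g is differentiable at x with derivative g′(x) = h(x). Then E[h(X)] ≤ E[X·g(X)], where the left-hand expectation is well-defined in [0,∞] since h ≥ 0 almost everywhere. -/

import Mathlib

open MeasureTheory ProbabilityTheory Real Set Filter Topology

noncomputable def phi : ℝ → ℝ := fun x => (Real.sqrt (2 * π))⁻¹ * Real.exp (-x ^ 2 / 2)

lemma phi_eq : gaussianPDFReal 0 1 = phi := by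
  ext x
  simp [gaussianPDFReal, phi]

lemma phi_nonneg (x : ℝ) : 0 ≤ phi x := by
  unfold phi; positivity

lemma phi_even (x : ℝ) : phi (-x) = phi x := by simp [phi]

lemma measurable_phi : Measurable phi := by unfold phi; fun_prop

lemma hasDerivAt_neg_phi (x : ℝ) : HasDerivAt (fun y => -phi y) (x * phi x) x := by
  have h1 : HasDerivAt (fun y : ℝ => -y ^ 2 / 2) (-x) x := by
    have := ((hasDerivAt_pow 2 x).neg).div_const 2
    refine this.congr_deriv ?_
    push_cast; ring
  have h2 := (h1.exp.const_mul ((Real.sqrt (2 * π))⁻¹)).neg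
  refine h2.congr_deriv ?_
  unfold phi; ring

lemma tendsto_phi_atTop : Tendsto phi atTop (𝓝 0) := by
  have h1 : Tendsto (fun x : ℝ => -x ^ 2 / 2) atTop atBot := by
    have h2 : Tendsto (fun x : ℝ => x ^ 2 / 2) atTop atTop :=
      (tendsto_pow_atTop (two_ne_zero)).atTop_div_const (by norm_num)
    exact (Filter.tendsto_neg_atTop_atBot.comp h2).congr fun x => by
      simp only [Function.comp_apply]; ring
  have h3 := (Real.tendsto_exp_atBot.comp h1).const_mul ((Real.sqrt (2 * π))⁻¹)
  rw [mul_zero] at h3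
  exact h3.congr (by intro x; simp [phi, Function.comp])

lemma integrable_mul_phi : Integrable (fun x => x * phi x) := by
  have h := (integrable_mul_exp_neg_mul_sq (b := 1/2) (by norm_num)).const_mul
    ((Real.sqrt (2 * π))⁻¹)
  apply h.congr
  filter_upwards with x
  unfold phi
  rw [show -(1/2 : ℝ) * x ^ 2 = -x ^ 2 / 2 by ring]
  ring

lemma integral_Ioi_mul_phi (t : ℝ) : ∫ x in Ioi t, x * phi x = phi t := by
  have := integral_Ioi_of_hasDerivAt_of_tendsto (f := fun y => -phi y)
    (f' := fun x => x * phi x) (a := t) (m := 0)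
    (hasDerivAt_neg_phi t).continuousAt.continuousWithinAt
    (fun x _ => hasDerivAt_neg_phi x) integrable_mul_phi.integrableOn
    (by simpa using tendsto_phi_atTop.neg)
  simpa using this

lemma integral_Iio_neg_mul_phi (t : ℝ) : ∫ x in Iio t, -x * phi x = phi t := by
  rw [Measure.restrict_congr_set Iio_ae_eq_Iic]
  have h1 : ∀ x : ℝ, -x * phi x = (fun y => y * phi y) (-x) := by
    intro x; simp [phi_even]
  rw [integral_congr_ae (Filter.Eventually.of_forall h1),
    integral_comp_neg_Iic t (fun y => y * phi y), integral_Ioi_mul_phi, phi_even]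

open MeasureTheory ProbabilityTheory Real Set Filter Topology
open scoped ENNReal NNReal

lemma lintegral_Ioi_phi {t : ℝ} (ht : 0 ≤ t) :
    ∫⁻ x in Ioi t, ENNReal.ofReal (x * phi x) = ENNReal.ofReal (phi t) := by
  rw [← integral_Ioi_mul_phi t,
    ofReal_integral_eq_lintegral_ofReal integrable_mul_phi.integrableOn
      ((ae_restrict_iff' measurableSet_Ioi).2 (Filter.Eventually.of_forall
        fun x hx => mul_nonneg (le_trans ht hx.le) (phi_nonneg x)))]

lemma lintegral_Iio_phi {t : ℝ} (ht : t ≤ 0) :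
    ∫⁻ x in Iio t, ENNReal.ofReal (-x * phi x) = ENNReal.ofReal (phi t) := by
  rw [← integral_Iio_neg_mul_phi t,
    ofReal_integral_eq_lintegral_ofReal (integrable_mul_phi.neg.congr
        (Filter.Eventually.of_forall fun x => by simp [neg_mul])).integrableOn
      ((ae_restrict_iff' measurableSet_Iio).2 (Filter.Eventually.of_forall
        fun x hx => mul_nonneg (by simp; linarith [hx.out]) (phi_nonneg x)))]

/-- Stein's lemma for monotone functions: if `g : ℝ → ℝ` is monotonically increasing,
`X ~ N(0,1)`, `E[|X g(X)|] < ∞`, and `h` is a measurable a.e. derivative of `g`, then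
`E[h(X)] ≤ E[X g(X)]`, the left-hand side being well-defined in `[0,∞]`. -/
theorem stmt_9 (g h : ℝ → ℝ) (hg : Monotone g) (hmeas : Measurable h)
    (hderiv : ∀ᵐ x ∂(volume : Measure ℝ), HasDerivAt g (h x) x)
    (hint : Integrable (fun x => x * g x) (gaussianReal 0 1)) :
    (∫⁻ x, ENNReal.ofReal (h x) ∂gaussianReal 0 1) ≤
      ENNReal.ofReal (∫ x, x * g x ∂gaussianReal 0 1) := by
  set G := hg.stieltjesFunction with hG
  set μs := G.measure with hμs
  set D : ℝ → ℝ≥0∞ := μs.rnDeriv volume with hD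
  have hDmeas : Measurable D := Measure.measurable_rnDeriv μs volume
  -- a.e. identification of h with the RN derivative
  have hae : ∀ᵐ x ∂(volume : Measure ℝ), ENNReal.ofReal (h x) = D x := by
    filter_upwards [hderiv, hg.ae_hasDerivAt, Measure.rnDeriv_lt_top μs volume]
      with x hx1 hx2 hx3
    rw [hx1.unique hx2, ENNReal.ofReal_toReal hx3.ne]
  -- facts on G
  have hGle : ∀ x y : ℝ, y < x → G y ≤ g x := by
    intro x y hyx
    rw [hG, hg.stieltjesFunction_eq]
    exact hg.rightLim_le hyx
  have hleG : ∀ x : ℝ, g x ≤ G x := fun x => by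
    rw [hG, hg.stieltjesFunction_eq]; exact hg.le_rightLim le_rfl
  have hleftLim : ∀ x : ℝ, Function.leftLim G x ≤ g x := by
    intro x
    refine le_of_tendsto (G.mono.tendsto_leftLim x) ?_
    filter_upwards [eventually_mem_nhdsWithin] with y hy
    exact hGle x y hy
  -- measure bounds
  have hmeas_Ioo_pos : ∀ x : ℝ, μs (Ioo 0 x) ≤ ENNReal.ofReal (g x - g 0) := by
    intro x
    rw [hμs, StieltjesFunction.measure_Ioo]
    exact ENNReal.ofReal_le_ofReal (by linarith [hleftLim x, hleG 0])
  have hmeas_Ioo_neg : ∀ x : ℝ, μs (Ioo x 0) ≤ ENNReal.ofReal (g 0 - g x) := by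
    intro x
    rw [hμs, StieltjesFunction.measure_Ioo]
    exact ENNReal.ofReal_le_ofReal (by linarith [hleftLim 0, hleG x])
  have hDbound_pos : ∀ x : ℝ, (∫⁻ t in Ico 0 x, D t) ≤ ENNReal.ofReal (g x - g 0) := by
    intro x
    rw [Measure.restrict_congr_set (Ioo_ae_eq_Ico).symm]
    exact (Measure.setLIntegral_rnDeriv_le _).trans (hmeas_Ioo_pos x)
  have hDbound_neg : ∀ x : ℝ, (∫⁻ t in Ioo x 0, D t) ≤ ENNReal.ofReal (g 0 - g x) := by
    intro x
    exact (Measure.setLIntegral_rnDeriv_le _).trans (hmeas_Ioo_neg x)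
  -- rewrite LHS as an integral against Lebesgue
  have hγ : gaussianReal 0 1 = volume.withDensity (gaussianPDF 0 1) :=
    gaussianReal_of_var_ne_zero 0 one_ne_zero
  have hpdf : ∀ x : ℝ, gaussianPDF 0 1 x = ENNReal.ofReal (phi x) := by
    intro x; rw [gaussianPDF, phi_eq]
  have hLHS : (∫⁻ x, ENNReal.ofReal (h x) ∂gaussianReal 0 1)
      = ∫⁻ x, ENNReal.ofReal (phi x) * D x ∂volume := by
    rw [hγ, lintegral_withDensity_eq_lintegral_mul volume (measurable_gaussianPDF 0 1)
      (g := fun x => ENNReal.ofReal (h x)) hmeas.ennreal_ofReal]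
    refine lintegral_congr_ae ?_
    filter_upwards [hae] with x hx
    simp only [Pi.mul_apply, hpdf x, hx]
  -- Tonelli, positive side
  have part1 : (∫⁻ t in Ici (0:ℝ), ENNReal.ofReal (phi t) * D t ∂volume)
      ≤ ∫⁻ x, (Ioi (0:ℝ)).indicator
          (fun x => ENNReal.ofReal (x * phi x) * ENNReal.ofReal (g x - g 0)) x ∂volume := by
    set F1 : ℝ × ℝ → ℝ≥0∞ := fun p => Set.indicator {q : ℝ × ℝ | 0 ≤ q.1 ∧ q.1 < q.2}
      (fun q => ENNReal.ofReal (q.2 * phi q.2) * D q.1) p with hF1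
    have hset : MeasurableSet {q : ℝ × ℝ | 0 ≤ q.1 ∧ q.1 < q.2} :=
      (measurableSet_le measurable_const measurable_fst).inter
        (measurableSet_lt measurable_fst measurable_snd)
    have hF1meas : Measurable F1 := by
      refine Measurable.indicator ?_ hset
      exact (ENNReal.measurable_ofReal.comp
        (measurable_snd.mul (measurable_phi.comp measurable_snd))).mul
        (hDmeas.comp measurable_fst)
    have step1 : (∫⁻ t in Ici (0:ℝ), ENNReal.ofReal (phi t) * D t ∂volume)
        = ∫⁻ t, ∫⁻ x, F1 (t, x) ∂volume ∂volume := by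
      rw [← lintegral_indicator measurableSet_Ici]
      refine lintegral_congr fun t => ?_
      by_cases ht : (0:ℝ) ≤ t
      · have hrw : (fun x => F1 (t, x))
            = (Ioi t).indicator (fun x => ENNReal.ofReal (x * phi x) * D t) := by
          funext x
          simp only [hF1, Set.indicator, mem_setOf_eq, mem_Ioi, ht, true_and]
        rw [Set.indicator_of_mem (mem_Ici.2 ht)]
        calc ENNReal.ofReal (phi t) * D t
            = (∫⁻ x in Ioi t, ENNReal.ofReal (x * phi x)) * D t := by
              rw [lintegral_Ioi_phi ht]
          _ = ∫⁻ x in Ioi t, ENNReal.ofReal (x * phi x) * D t :=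
              (lintegral_mul_const _ (ENNReal.measurable_ofReal.comp
                (measurable_id.mul measurable_phi))).symm
          _ = ∫⁻ x, (Ioi t).indicator (fun x => ENNReal.ofReal (x * phi x) * D t) x ∂volume :=
              (lintegral_indicator measurableSet_Ioi _).symm
          _ = ∫⁻ x, F1 (t, x) ∂volume := by rw [hrw]
      · have : ∀ x, F1 (t, x) = 0 := by
          intro x; simp [hF1, Set.indicator, ht]
        simp [this, Set.indicator_of_notMem (by simpa using ht : t ∉ Ici (0:ℝ))]
    have step2 : (∫⁻ t, ∫⁻ x, F1 (t, x) ∂volume ∂volume)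
        = ∫⁻ x, ∫⁻ t, F1 (t, x) ∂volume ∂volume :=
      lintegral_lintegral_swap hF1meas.aemeasurable
    rw [step1, step2]
    refine lintegral_mono fun x => ?_
    have hrw : (fun t => F1 (t, x))
        = (Ico 0 x).indicator (fun t => ENNReal.ofReal (x * phi x) * D t) := by
      funext t
      simp only [hF1, Set.indicator, mem_setOf_eq, mem_Ico]
    rw [hrw, lintegral_indicator measurableSet_Ico, lintegral_const_mul _ hDmeas]
    by_cases hx : (0:ℝ) < x
    · rw [Set.indicator_of_mem (mem_Ioi.mpr hx)]
      exact mul_le_mul_right (hDbound_pos x) _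
    · rw [Ico_eq_empty (fun hc => hx hc)]
      simp
  -- Tonelli, negative side
  have part2 : (∫⁻ t in Iio (0:ℝ), ENNReal.ofReal (phi t) * D t ∂volume)
      ≤ ∫⁻ x, (Iio (0:ℝ)).indicator
          (fun x => ENNReal.ofReal (-x * phi x) * ENNReal.ofReal (g 0 - g x)) x ∂volume := by
    set F2 : ℝ × ℝ → ℝ≥0∞ := fun p => Set.indicator {q : ℝ × ℝ | q.1 < 0 ∧ q.2 < q.1}
      (fun q => ENNReal.ofReal (-q.2 * phi q.2) * D q.1) p with hF2
    have hset : MeasurableSet {q : ℝ × ℝ | q.1 < 0 ∧ q.2 < q.1} :=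
      (measurableSet_lt measurable_fst measurable_const).inter
        (measurableSet_lt measurable_snd measurable_fst)
    have hF2meas : Measurable F2 := by
      refine Measurable.indicator ?_ hset
      exact (ENNReal.measurable_ofReal.comp
        ((measurable_snd.neg).mul (measurable_phi.comp measurable_snd))).mul
        (hDmeas.comp measurable_fst)
    have step1 : (∫⁻ t in Iio (0:ℝ), ENNReal.ofReal (phi t) * D t ∂volume)
        = ∫⁻ t, ∫⁻ x, F2 (t, x) ∂volume ∂volume := by
      rw [← lintegral_indicator measurableSet_Iio]
      refine lintegral_congr fun t => ?_
      by_cases ht : t < (0:ℝ)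
      · have hrw : (fun x => F2 (t, x))
            = (Iio t).indicator (fun x => ENNReal.ofReal (-x * phi x) * D t) := by
          funext x
          simp only [hF2, Set.indicator, mem_setOf_eq, mem_Iio, ht, true_and]
        rw [Set.indicator_of_mem (mem_Iio.2 ht)]
        calc ENNReal.ofReal (phi t) * D t
            = (∫⁻ x in Iio t, ENNReal.ofReal (-x * phi x)) * D t := by
              rw [lintegral_Iio_phi ht.le]
          _ = ∫⁻ x in Iio t, ENNReal.ofReal (-x * phi x) * D t :=
              (lintegral_mul_const _ (ENNReal.measurable_ofReal.comp
                (measurable_id.neg.mul measurable_phi))).symm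
          _ = ∫⁻ x, (Iio t).indicator (fun x => ENNReal.ofReal (-x * phi x) * D t) x ∂volume :=
              (lintegral_indicator measurableSet_Iio _).symm
          _ = ∫⁻ x, F2 (t, x) ∂volume := by rw [hrw]
      · have : ∀ x, F2 (t, x) = 0 := by
          intro x; simp [hF2, Set.indicator, ht]
        simp [this, Set.indicator_of_notMem (by simpa using ht : t ∉ Iio (0:ℝ))]
    have step2 : (∫⁻ t, ∫⁻ x, F2 (t, x) ∂volume ∂volume)
        = ∫⁻ x, ∫⁻ t, F2 (t, x) ∂volume ∂volume :=
      lintegral_lintegral_swap hF2meas.aemeasurable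
    rw [step1, step2]
    refine lintegral_mono fun x => ?_
    have hrw : (fun t => F2 (t, x))
        = (Ioo x 0).indicator (fun t => ENNReal.ofReal (-x * phi x) * D t) := by
      funext t
      simp only [hF2, Set.indicator, mem_setOf_eq, mem_Ioo, and_comm]
    rw [hrw, lintegral_indicator measurableSet_Ioo, lintegral_const_mul _ hDmeas]
    by_cases hx : x < (0:ℝ)
    · rw [Set.indicator_of_mem (mem_Iio.mpr hx)]
      exact mul_le_mul_right (hDbound_neg x) _
    · rw [Ioo_eq_empty (fun hc => hx hc)]
      simp
  -- combine the two sides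
  have hcomb : (∫⁻ x, ENNReal.ofReal (h x) ∂gaussianReal 0 1)
      ≤ ∫⁻ x, ENNReal.ofReal (x * (g x - g 0) * phi x) ∂volume := by
    rw [hLHS, ← lintegral_add_compl (fun x => ENNReal.ofReal (phi x) * D x)
      (measurableSet_Ici (a := (0:ℝ))), compl_Ici]
    refine le_trans (add_le_add part1 part2) ?_
    rw [← lintegral_add_left]
    · refine lintegral_mono fun x => ?_
      rcases lt_trichotomy x 0 with hx | rfl | hx
      · rw [Set.indicator_of_notMem (by simp [not_lt.2 hx.le] : x ∉ Ioi (0:ℝ)),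
          Set.indicator_of_mem (mem_Iio.mpr hx), zero_add,
          ← ENNReal.ofReal_mul (by nlinarith [phi_nonneg x])]
        exact ENNReal.ofReal_le_ofReal (le_of_eq (by ring))
      · simp
      · rw [Set.indicator_of_mem (mem_Ioi.mpr hx),
          Set.indicator_of_notMem (by simp [hx.le] : x ∉ Iio (0:ℝ)), add_zero,
          ← ENNReal.ofReal_mul (by nlinarith [phi_nonneg x])]
        exact ENNReal.ofReal_le_ofReal (le_of_eq (by ring))
    · exact Measurable.indicator ((ENNReal.measurable_ofReal.comp
        (measurable_id.mul measurable_phi)).mul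
        (ENNReal.measurable_ofReal.comp ((hg.measurable.sub measurable_const))))
        measurableSet_Ioi
  -- integrability facts
  have hint' : Integrable (fun x => x * g x * phi x) volume := by
    have hint_w : Integrable (fun x => x * g x) (volume.withDensity (gaussianPDF 0 1)) := by
      rw [← hγ]; exact hint
    have h1 := (integrable_withDensity_iff (measurable_gaussianPDF 0 1)
      (Filter.Eventually.of_forall fun x => ENNReal.ofReal_lt_top)).1 hint_w
    refine h1.congr (Filter.Eventually.of_forall fun x => ?_)
    simp only [hpdf x, ENNReal.toReal_ofReal (phi_nonneg x)]
  have hint2 : Integrable (fun x => x * (g x - g 0) * phi x) volume :=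
    (hint'.sub (integrable_mul_phi.const_mul (g 0))).congr
      (Filter.Eventually.of_forall fun x => by simp only [Pi.sub_apply]; ring)
  have hnn : ∀ x : ℝ, 0 ≤ x * (g x - g 0) * phi x := by
    intro x
    rcases le_or_gt 0 x with hx | hx
    · exact mul_nonneg (mul_nonneg hx (sub_nonneg.2 (hg hx))) (phi_nonneg x)
    · have h1 : g x ≤ g 0 := hg hx.le
      have h2 := phi_nonneg x
      have key := mul_nonneg (mul_nonneg (neg_nonneg.2 hx.le)
        (neg_nonneg.2 (sub_nonpos.2 h1))) h2
      nlinarith [key]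
  have hkey : (∫⁻ x, ENNReal.ofReal (x * (g x - g 0) * phi x) ∂volume)
      = ENNReal.ofReal (∫ x, x * (g x - g 0) * phi x ∂volume) :=
    (ofReal_integral_eq_lintegral_ofReal hint2 (Filter.Eventually.of_forall hnn)).symm
  -- the first moment of the gaussian density vanishes
  have hxphi : (∫ x, x * phi x ∂volume) = 0 := by
    have hsplit := integral_add_compl (measurableSet_Iic (a := (0:ℝ)))
      integrable_mul_phi
    rw [compl_Iic] at hsplit
    have hIic : (∫ x in Iic (0:ℝ), x * phi x) = -phi 0 := by
      rw [← Measure.restrict_congr_set Iio_ae_eq_Iic,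
        show (fun x => x * phi x) = fun x => -(-x * phi x) from funext fun x => by ring,
        integral_neg, integral_Iio_neg_mul_phi]
    rw [← hsplit, hIic, integral_Ioi_mul_phi]
    ring
  -- identify the real integrals
  have hval : (∫ x, x * (g x - g 0) * phi x ∂volume) = ∫ x, x * g x ∂gaussianReal 0 1 := by
    have e1 : (∫ x, x * (g x - g 0) * phi x ∂volume)
        = (∫ x, x * g x * phi x ∂volume) - g 0 * ∫ x, x * phi x ∂volume := by
      rw [← integral_const_mul, ← integral_sub hint'
        (integrable_mul_phi.const_mul (g 0))]
      refine integral_congr_ae (Filter.Eventually.of_forall fun x => ?_)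
      ring
    have e2 : (∫ x, x * g x ∂gaussianReal 0 1) = ∫ x, x * g x * phi x ∂volume := by
      rw [hγ]
      have hwd : (volume : Measure ℝ).withDensity (gaussianPDF 0 1)
          = volume.withDensity (fun x => ((phi x).toNNReal : ℝ≥0∞)) := by
        congr 1
        funext x
        rw [hpdf x]
        rfl
      rw [hwd, integral_withDensity_eq_integral_smul (measurable_phi.real_toNNReal)]
      refine integral_congr_ae (Filter.Eventually.of_forall fun x => ?_)
      simp only [NNReal.smul_def, smul_eq_mul, Real.coe_toNNReal _ (phi_nonneg x)]
      ring
    rw [e1, hxphi, e2]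
    ring
  exact hcomb.trans (le_of_eq (by rw [hkey, hval]))
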